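/- The Price of Anarchy of M_AV over exact pure Nash equilibria is Ω(n), even when all external rewards are zero. Concretely: let a, a', s ≥ 0 with a' + s > 0 and a + a' + s > 0, and T = (a'+s)/(a'+s+a). For every integer n ≥ 1 and every ε > 0, consider the instance with n+1 experts and 2 proposals, all g_{ij} = 0, where expert 1 has w_1 = 1/n + ε, p_{11} = 1, p_{12} = 0, and each expert i ∈ {2, …, n+1} has w_i = 1/n, p_{i1} = 0, p_{i2} = 1. Then the voting profile in which expert 1 approves only proposal 1 and every other expert disapproves both proposals is a pure Nash equilibrium of M_AV; its winner is proposal 1, and Qual[1] = 1/n + ε while Qual[2] = 1. -/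

import Mathlib

open Finset

/-- Total approving weight of proposal `j` under voting profile `r`. -/
def approvalWeight {n k : ℕ} (w : Fin n → ℝ) (r : Fin n → Fin k → Bool) (j : Fin k) : ℝ :=
  ∑ i, if r i j then w i else 0

/-- The winner of the approval-voting mechanism `M_AV`: the proposal of smallest index
maximizing the total approving weight; no proposal is selected when every proposal has zero
total approving weight. -/
noncomputable def winner {n k : ℕ} (w : Fin n → ℝ) (r : Fin n → Fin k → Bool) :
    Option (Fin k) :=
  if h : ∀ j, approvalWeight w r j = 0 then none
  else
    some ((Finset.univ.filter fun j => ∀ j', approvalWeight w r j' ≤ approvalWeight w r j).min'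
      (by
        obtain ⟨j0, -⟩ := not_forall.mp h
        obtain ⟨j, -, hj⟩ :=
          Finset.exists_max_image Finset.univ (approvalWeight w r) ⟨j0, Finset.mem_univ j0⟩
        exact ⟨j, Finset.mem_filter.mpr
          ⟨Finset.mem_univ j, fun j' => hj j' (Finset.mem_univ j')⟩⟩))

/-- Expected utility of expert `i` under profile `r`, beliefs `p`, external rewards `g`,
and reward parameters `a`, `a'`, `s`. -/
noncomputable def utility {n k : ℕ} (w : Fin n → ℝ) (p g : Fin n → Fin k → ℝ)
    (a a' s : ℝ) (r : Fin n → Fin k → Bool) (i : Fin n) : ℝ :=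
  match winner w r with
  | none => 0
  | some j => g i j * p i j + (if r i j then a * p i j - s * (1 - p i j) else a' * (1 - p i j))

/-- Estimated quality of proposal `j` with respect to threshold `T`. -/
noncomputable def qual {n k : ℕ} (w : Fin n → ℝ) (p : Fin n → Fin k → ℝ) (T : ℝ)
    (j : Fin k) : ℝ :=
  ∑ i, if T ≤ p i j then w i else 0

/-- The profile obtained from `r` by flipping the single vote of expert `i` on proposal `j`. -/
def flipVote {n k : ℕ} (r : Fin n → Fin k → Bool) (i : Fin n) (j : Fin k) :
    Fin n → Fin k → Bool :=
  Function.update r i (Function.update (r i) j (!(r i j)))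

/-- A profile is semi-strategically consistent if flipping any dishonest vote to its honest
value strictly decreases the deviating expert's utility. -/
def semiStrategicConsistent {n k : ℕ} (w : Fin n → ℝ) (p g : Fin n → Fin k → ℝ)
    (a a' s T : ℝ) (r : Fin n → Fin k → Bool) : Prop :=
  ∀ i j, ((r i j = true ∧ p i j < T) ∨ (r i j = false ∧ T ≤ p i j)) →
    utility w p g a a' s (flipVote r i j) i < utility w p g a a' s r i

lemma winner_fst {n : ℕ} (w : Fin n → ℝ) (r : Fin n → Fin 2 → Bool)
    (h1 : approvalWeight w r 1 ≤ approvalWeight w r 0) (h0 : approvalWeight w r 0 ≠ 0) :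
    winner w r = some 0 := by
  unfold winner
  rw [dif_neg (by push_neg; exact ⟨0, h0⟩)]
  congr 1
  apply le_antisymm
  · apply Finset.min'_le
    refine Finset.mem_filter.mpr ⟨Finset.mem_univ _, fun j' => ?_⟩
    fin_cases j' <;> simp [h1]
  · exact Fin.zero_le _

lemma winner_snd {n : ℕ} (w : Fin n → ℝ) (r : Fin n → Fin 2 → Bool)
    (h1 : approvalWeight w r 0 < approvalWeight w r 1)
    (h0 : approvalWeight w r 1 ≠ 0) :
    winner w r = some 1 := by
  unfold winner
  rw [dif_neg (by push_neg; exact ⟨1, h0⟩)]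
  congr 1
  have hne : (Finset.univ.filter fun j => ∀ j', approvalWeight w r j' ≤ approvalWeight w r j).Nonempty := by
    exact ⟨1, Finset.mem_filter.mpr ⟨Finset.mem_univ _, fun j' => by
      fin_cases j' <;> simp [le_of_lt h1]⟩⟩
  have hmem := Finset.min'_mem _ hne
  set m := (Finset.univ.filter fun j => ∀ j', approvalWeight w r j' ≤ approvalWeight w r j).min' hne with hm
  have hle := (Finset.mem_filter.mp hmem).2 1
  have hne0 : m ≠ 0 := by
    intro h
    rw [h] at hle
    exact absurd hle (not_le.mpr h1)
  have := Fin.ext_iff.not.mp hne0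
  exact Fin.ext (by omega)

/-- Proposition 3.3: the Price of Anarchy of `M_AV` is `Ω(n)`, even with all external rewards
zero.  In the instance with `n+1` experts and 2 proposals where expert 1 has weight `1/n + ε`
and beliefs `(1, 0)` and every other expert has weight `1/n` and beliefs `(0, 1)`, the profile
in which expert 1 approves only proposal 1 and everyone else disapproves both proposals is a
pure Nash equilibrium; its winner is proposal 1, of quality `1/n + ε`, while proposal 2 has
quality `1`. -/
theorem stmt5 (a a' s : ℝ) (ha : 0 ≤ a) (ha' : 0 ≤ a') (hs : 0 ≤ s)
    (hpos : 0 < a' + s) (hsum : 0 < a + a' + s)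
    (T : ℝ) (hT : T = (a' + s) / (a' + s + a))
    (n : ℕ) (hn : 1 ≤ n) (ε : ℝ) (hε : 0 < ε) :
    let w : Fin (n+1) → ℝ := fun i => if i = 0 then 1/(n:ℝ) + ε else 1/(n:ℝ)
    let p : Fin (n+1) → Fin 2 → ℝ := fun i => if i = 0 then ![1, 0] else ![0, 1]
    let g : Fin (n+1) → Fin 2 → ℝ := fun _ _ => 0
    let r : Fin (n+1) → Fin 2 → Bool :=
      fun i => if i = 0 then ![true, false] else ![false, false]
    (∀ i (r' : Fin 2 → Bool),
      utility w p g a a' s (Function.update r i r') i ≤ utility w p g a a' s r i) ∧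
    winner w r = some 0 ∧
    qual w p T 0 = 1/(n:ℝ) + ε ∧
    qual w p T 1 = 1 := by
  intro w p g r
  have hn' : (1:ℝ) ≤ (n:ℝ) := by exact_mod_cast hn
  have npos : (0:ℝ) < (n:ℝ) := by linarith
  have hinv : (0:ℝ) < 1/(n:ℝ) := by positivity
  have hwnn : ∀ i, 0 ≤ w i := by
    intro i; simp only [w]; split_ifs <;> positivity
  have hw0 : w 0 = 1/(n:ℝ) + ε := by simp [w]
  have hwi : ∀ i : Fin (n+1), i ≠ 0 → w i = 1/(n:ℝ) := by
    intro i hi; simp [w, hi]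
  -- approval weights under r
  have haw0 : approvalWeight w r 0 = 1/(n:ℝ) + ε := by
    unfold approvalWeight
    rw [Finset.sum_eq_single 0]
    · simp [r, w]
    · intro i _ hi; simp [r, hi]
    · simp
  have haw1 : approvalWeight w r 1 = 0 := by
    apply Finset.sum_eq_zero
    intro i _
    rcases eq_or_ne i 0 with h | h <;> simp [r, h]
  have hwin : winner w r = some 0 := by
    apply winner_fst
    · rw [haw0, haw1]; positivity
    · rw [haw0]; positivity
  -- utility at r
  have hu0 : utility w p g a a' s r 0 = a := by
    unfold utility; rw [hwin]; simp [r, p, g]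
  have hui : ∀ i : Fin (n+1), i ≠ 0 → utility w p g a a' s r i = a' := by
    intro i hi
    unfold utility; rw [hwin]; simp [r, p, g, hi]
  have hT0 : 0 < T := by rw [hT]; exact div_pos hpos (by linarith)
  have hT1 : T ≤ 1 := by
    rw [hT]; rw [div_le_one (by linarith)]; linarith
  refine ⟨?_, hwin, ?_, ?_⟩
  · -- PNE
    intro i r'
    set r2 := Function.update r i r' with hr2
    rcases eq_or_ne i 0 with hi | hi
    · subst hi
      have haw0' : approvalWeight w r2 0 = if r' 0 then w 0 else 0 := by
        unfold approvalWeight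
        rw [Finset.sum_eq_single 0]
        · simp [r2]
        · intro i _ hi
          simp [r2, Function.update_of_ne hi, r, hi]
        · simp
      have haw1' : approvalWeight w r2 1 = if r' 1 then w 0 else 0 := by
        unfold approvalWeight
        rw [Finset.sum_eq_single 0]
        · simp [r2]
        · intro i _ hi
          simp [r2, Function.update_of_ne hi, r, hi]
        · simp
      rw [hu0]
      cases h0 : r' 0 <;> cases h1 : r' 1
      · -- no votes: winner none
        have : winner w r2 = none := by
          unfold winner
          rw [dif_pos]
          intro j; fin_cases j
          · simpa [h0] using haw0'
          · simpa [h1] using haw1'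
        simp [utility, this, ha]
      · -- votes only 2: winner 1, utility -s
        have hw2 : winner w r2 = some 1 := by
          apply winner_snd
          · rw [haw0', haw1', h0, h1]
            simp only [if_true, if_false]
            rw [hw0]; positivity
          · rw [haw1', h1]; simp only [if_true]; rw [hw0]; positivity
        unfold utility
        rw [hw2]
        simp [r2, h1, p, g]
        linarith
      · -- votes only 1
        have hw2 : winner w r2 = some 0 := by
          apply winner_fst
          · rw [haw0', haw1', h0, h1]; simp [hwnn 0]
          · rw [haw0', h0]; simp only [if_true]; rw [hw0]; positivity
        unfold utility
        rw [hw2]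
        simp [r2, h0, p, g]
      · -- votes both
        have hw2 : winner w r2 = some 0 := by
          apply winner_fst
          · rw [haw0', haw1', h0, h1]
          · rw [haw0', h0]; simp only [if_true]; rw [hw0]; positivity
        unfold utility
        rw [hw2]
        simp [r2, h0, p, g]
    · -- i ≠ 0 deviates
      have hr20 : r2 0 0 = true := by
        simp [r2, Function.update_of_ne (Ne.symm hi), r]
      have haw1' : approvalWeight w r2 1 = if r' 1 then w i else 0 := by
        unfold approvalWeight
        rw [Finset.sum_eq_single i]
        · simp [r2]
        · intro i' _ hi'
          have h2 : r2 i' = r i' := Function.update_of_ne hi' _ _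
          rw [h2]
          rcases eq_or_ne i' 0 with h | h <;> simp [r, h]
        · simp
      have haw0ge : w 0 ≤ approvalWeight w r2 0 := by
        unfold approvalWeight
        have := Finset.single_le_sum (f := fun i' => if r2 i' 0 then w i' else 0)
          (fun i' _ => by split_ifs; exacts [hwnn i', le_refl 0]) (Finset.mem_univ 0)
        simpa [hr20] using this
      have hlt : approvalWeight w r2 1 ≤ approvalWeight w r2 0 := by
        have h1 : approvalWeight w r2 1 ≤ 1/(n:ℝ) := by
          rw [haw1']; split_ifs
          · rw [hwi i hi]
          · positivity
        have : (1:ℝ)/n < w 0 := by rw [hw0]; linarith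
        linarith
      have hw2 : winner w r2 = some 0 := by
        apply winner_fst w r2 hlt
        have : 0 < approvalWeight w r2 0 := by
          have : (0:ℝ) < w 0 := by rw [hw0]; positivity
          linarith
        positivity
      rw [hui i hi]
      unfold utility
      rw [hw2]
      simp [r2, p, g, hi]
      split_ifs <;> linarith
  · -- qual 0
    unfold qual
    rw [Finset.sum_eq_single 0]
    · simp [p, w, hT1]
    · intro i _ hi
      simp [p, hi, not_le.mpr hT0]
    · simp
  · -- qual 1
    unfold qual
    rw [Fin.sum_univ_succ]
    have h0 : p 0 1 = 0 := by simp [p]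
    rw [h0, if_neg (not_le.mpr hT0)]
    have : ∀ i : Fin n, (if T ≤ p i.succ 1 then w i.succ else 0) = 1/(n:ℝ) := by
      intro i
      have hne : (i.succ : Fin (n+1)) ≠ 0 := Fin.succ_ne_zero i
      rw [hwi _ hne]
      simp [p, hne, hT1]
    rw [Finset.sum_congr rfl fun i _ => this i]
    simp
    field_simp
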